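/- Let 0 < α < 1 and let w : ℕ → (0,∞) with w(0)=1 satisfy w(k) = k^α + v(k), v(k) = o(k^α), with increments bounded above. Let (θ_j)_{j≥1} be independent exponential random variables with rates w(j−1), τ_k := θ_1 + ⋯ + θ_k, and X_u := #{k ≥ 1 : τ_k < u}. Then there exists D < ∞ such that for all u ≥ 0, E[X_u] ≤ D (1+u)^{1/(1−α)} and E[X_u²] ≤ D (1+u)^{2/(1−α)}. -/

import Mathlib

open MeasureTheory ProbabilityTheory Filter Asymptotics ENNReal


lemma aux_sum_range_odd (n : ℕ) : ∑ k ∈ Finset.range n, (2*k+1) = n^2 := by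
  induction n with
  | zero => simp
  | succ m ih => rw [Finset.sum_range_succ, ih]; ring

lemma aux_odd_le (k : ℕ) : 2*k+1 ≤ 3 * 2^k := by
  induction k with
  | zero => norm_num
  | succ m ih => have : 1 ≤ 2^m := Nat.one_le_two_pow; rw [pow_succ]; omega

lemma aux_sq_tsum (a : ℕ → ℝ≥0∞) (ha : ∀ k, a k ≤ 1) :
    (∑' k, a k)^2 ≤ ∑' k, ((2*k+1 : ℕ) : ℝ≥0∞) * a k := by
  have key : ∀ k l, a k * a l ≤ (if l ≤ k then a k else 0) + (if k < l then a l else 0) := by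
    intro k l
    rcases le_or_gt l k with h | h
    · simpa [h, not_lt.2 h] using mul_le_of_le_one_right zero_le (ha l)
    · simpa [h, not_le.2 h] using mul_le_of_le_one_left zero_le (ha k)
  have inner1 : ∀ k, (∑' l : ℕ, if l ≤ k then a k else 0) = ((k+1 : ℕ) : ℝ≥0∞) * a k := by
    intro k
    rw [tsum_eq_sum (s := Finset.range (k+1))
      (by intro l hl; rw [if_neg]; simp at hl; omega)]
    rw [Finset.sum_congr rfl (fun l hl => if_pos (by simp at hl; omega))]
    simp [Finset.sum_const, nsmul_eq_mul]
  have inner2 : ∀ l, (∑' k : ℕ, if k < l then a l else 0) = (l : ℝ≥0∞) * a l := by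
    intro l
    rw [tsum_eq_sum (s := Finset.range l)
      (by intro k hk; rw [if_neg]; simp at hk; omega)]
    rw [Finset.sum_congr rfl (fun k hk => if_pos (by simpa using hk))]
    simp [Finset.sum_const, nsmul_eq_mul]
  calc (∑' k, a k)^2 = ∑' k, a k * ∑' l, a l := by rw [sq, ENNReal.tsum_mul_right]
    _ = ∑' k, ∑' l, a k * a l := tsum_congr (fun k => (ENNReal.tsum_mul_left).symm)
    _ ≤ ∑' k, ∑' l, ((if l ≤ k then a k else 0) + (if k < l then a l else 0)) :=
        ENNReal.tsum_le_tsum (fun k => ENNReal.tsum_le_tsum (key k))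
    _ = ∑' k, ((∑' l : ℕ, if l ≤ k then a k else 0) + ∑' l : ℕ, if k < l then a l else 0) :=
        tsum_congr (fun k => ENNReal.tsum_add)
    _ = ∑' k : ℕ, (((k+1 : ℕ) : ℝ≥0∞) * a k + ∑' l : ℕ, if k < l then a l else 0) :=
        tsum_congr (fun k => by rw [inner1])
    _ = (∑' k : ℕ, ((k+1 : ℕ) : ℝ≥0∞) * a k) + ∑' k : ℕ, ∑' l : ℕ, (if k < l then a l else 0) :=
        ENNReal.tsum_add
    _ = (∑' k : ℕ, ((k+1 : ℕ) : ℝ≥0∞) * a k) + ∑' l : ℕ, ∑' k : ℕ, (if k < l then a l else 0) := by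
        rw [ENNReal.tsum_comm]
    _ = (∑' k : ℕ, ((k+1 : ℕ) : ℝ≥0∞) * a k) + ∑' l : ℕ, (l : ℝ≥0∞) * a l := by
        rw [tsum_congr inner2]
    _ = ∑' k : ℕ, (((k+1 : ℕ) : ℝ≥0∞) * a k + (k : ℝ≥0∞) * a k) := ENNReal.tsum_add.symm
    _ = ∑' k, ((2*k+1 : ℕ) : ℝ≥0∞) * a k := by
        apply tsum_congr; intro k; push_cast; ring

lemma aux_select (n : ℕ) (hn : 1 ≤ n) (u : ℝ) (f : ℕ → ℝ)
    (hpos : ∀ j ∈ Finset.Icc 1 n, 0 < f j)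
    (hsum : ∑ j ∈ Finset.Icc 1 n, f j < u) :
    ∃ S ⊆ Finset.Icc 1 n, S.card = n - n / 2 ∧ ∀ j ∈ S, f j < 2 * u / n := by
  classical
  have hn0 : (0:ℝ) < n := by exact_mod_cast hn
  have hu0 : 0 < u :=
    lt_trans (Finset.sum_pos hpos ⟨1, Finset.mem_Icc.2 ⟨le_refl 1, hn⟩⟩) hsum
  set t := 2*u/(n:ℝ) with ht
  set S₀ := (Finset.Icc 1 n).filter (fun j => f j < t) with hS₀
  have hsub : S₀ ⊆ Finset.Icc 1 n := Finset.filter_subset _ _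
  have hIcc : (Finset.Icc 1 n).card = n := by rw [Nat.card_Icc]; omega
  have hcard : n - n/2 ≤ S₀.card := by
    by_contra hc
    push_neg at hc
    set T := Finset.Icc 1 n \ S₀ with hT
    have hS0le : S₀.card ≤ n := hIcc ▸ Finset.card_le_card hsub
    have hTcard : T.card = n - S₀.card := by rw [hT, Finset.card_sdiff_of_subset hsub, hIcc]
    have hTT : ∀ j ∈ T, t ≤ f j := by
      intro j hj
      rw [hT, Finset.mem_sdiff] at hj
      have h2 := hj.2
      rw [hS₀, Finset.mem_filter] at h2
      push_neg at h2
      exact h2 (hj.1)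
    have h1 : (T.card : ℝ) * t ≤ ∑ j ∈ T, f j := by
      calc (T.card:ℝ)*t = ∑ _j ∈ T, t := by rw [Finset.sum_const, nsmul_eq_mul]
        _ ≤ ∑ j ∈ T, f j := Finset.sum_le_sum hTT
    have h2 : ∑ j ∈ T, f j ≤ ∑ j ∈ Finset.Icc 1 n, f j :=
      Finset.sum_le_sum_of_subset_of_nonneg Finset.sdiff_subset (fun j hj _ => (hpos j hj).le)
    have h3 : u ≤ (T.card:ℝ) * t := by
      have hT2 : (n:ℝ) ≤ 2 * T.card := by
        have : n ≤ 2 * T.card := by omega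
        exact_mod_cast this
      rw [ht, mul_div_assoc']
      rw [le_div_iff₀ hn0]
      nlinarith
    linarith
  obtain ⟨S, hSsub, hScard⟩ := Finset.exists_subset_card_eq hcard
  exact ⟨S, hSsub.trans hsub, hScard, fun j hj => (Finset.mem_filter.1 (hSsub hj)).2⟩

lemma aux_pow_helper {n h : ℕ} (hnh : n ≤ 2 * h) :
    (2:ℝ≥0∞)^n * ((2:ℝ≥0∞))⁻¹^(6*h) ≤ (4:ℝ≥0∞)⁻¹^n := by
  have h2 : (2:ℝ≥0∞)⁻¹ ≤ 1 := ENNReal.inv_le_one.2 one_le_two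
  have h1 : (2:ℝ≥0∞)⁻¹^(6*h) ≤ (2:ℝ≥0∞)⁻¹^(3*n) :=
    pow_le_pow_of_le_one zero_le h2 (by omega)
  calc (2:ℝ≥0∞)^n * 2⁻¹^(6*h) ≤ (2:ℝ≥0∞)^n * 2⁻¹^(3*n) := mul_le_mul_right h1 _
    _ = ((2:ℝ≥0∞) * 2⁻¹)^n * (2⁻¹^2)^n := by
        rw [mul_pow, ← pow_mul]; ring
    _ = (2⁻¹^2 : ℝ≥0∞)^n := by
        rw [ENNReal.mul_inv_cancel (by norm_num) (by norm_num)]; rw [one_pow, one_mul]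
    _ = (4:ℝ≥0∞)⁻¹^n := by rw [← ENNReal.inv_pow]; norm_num




open MeasureTheory ProbabilityTheory Filter Asymptotics ENNReal

set_option maxHeartbeats 2000000 in
/-- Under hypothesis (b) (`w k = k^α + v k`, `0 < α < 1`, `v = o(k^α)`) with
bounded increments, for `X_u = #{k ≥ 1 : τ_k < u}` there is `D < ∞` with
`E[X_u] ≤ D (1+u)^{1/(1-α)}` and `E[X_u²] ≤ D (1+u)^{2/(1-α)}` for all `u ≥ 0`. -/
theorem statement16
    {Ω : Type*} [MeasureSpace Ω] [IsProbabilityMeasure (ℙ : Measure Ω)]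
    (α : ℝ) (hα0 : 0 < α) (hα1 : α < 1)
    (w v : ℕ → ℝ) (hw : ∀ k, 0 < w k) (hw0 : w 0 = 1)
    (hwv : ∀ k, w k = (k : ℝ) ^ α + v k)
    (hv : v =o[atTop] fun k : ℕ => (k : ℝ) ^ α)
    (r₀ : ℝ) (hincr : ∀ k : ℕ, w (k + 1) - w k ≤ r₀)
    (θ : ℕ → Ω → ℝ) (hmeas : ∀ j, Measurable (θ j))
    (hindep : iIndepFun θ ℙ)
    (hexp : ∀ j, 1 ≤ j → ∀ t : ℝ, 0 ≤ t →
      ℙ {ω | t < θ j ω} = ENNReal.ofReal (Real.exp (-(w (j - 1)) * t)))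
    (τ : ℕ → Ω → ℝ) (hτ : ∀ k ω, τ k ω = ∑ j ∈ Finset.Icc 1 k, θ j ω)
    (X : ℝ → Ω → ℝ≥0∞)
    (hX : ∀ u ω, X u ω = ∑' k : ℕ, if τ (k + 1) ω < u then (1 : ℝ≥0∞) else 0) :
    ∃ D : ℝ, 0 < D ∧ ∀ u : ℝ, 0 ≤ u →
      (∫⁻ ω, X u ω ∂ℙ) ≤ ENNReal.ofReal (D * (1 + u) ^ (1 / (1 - α))) ∧
      (∫⁻ ω, (X u ω) ^ 2 ∂ℙ) ≤ ENNReal.ofReal (D * (1 + u) ^ (2 / (1 - α))) := by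
  classical
  have h1α : (0:ℝ) < 1 - α := by linarith
  -- w k ≤ C (k+1)^α
  obtain ⟨k₀, hk₀⟩ : ∃ k₀ : ℕ, ∀ k ≥ k₀, ‖v k‖ ≤ (1/2) * ‖((k:ℝ)^α)‖ := by
    have := hv.def (by norm_num : (0:ℝ) < 1/2)
    exact eventually_atTop.1 this
  set C : ℝ := 2 + ∑ k ∈ Finset.range k₀, w k with hC
  have hC2 : 2 ≤ C := by
    have : (0:ℝ) ≤ ∑ k ∈ Finset.range k₀, w k :=
      Finset.sum_nonneg (fun k _ => (hw k).le)
    simp [hC]; linarith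
  have hC0 : (0:ℝ) < C := by linarith
  have hCw : ∀ k : ℕ, w k ≤ C * ((k:ℝ)+1)^α := by
    intro k
    have hk1 : (0:ℝ) ≤ ((k:ℝ)+1)^α := Real.rpow_nonneg (by positivity) _
    rcases lt_or_ge k k₀ with h | h
    · have h1 : w k ≤ ∑ j ∈ Finset.range k₀, w j :=
        Finset.single_le_sum (fun j _ => (hw j).le) (Finset.mem_range.2 h)
      have h2 : (1:ℝ) ≤ ((k:ℝ)+1)^α :=
        Real.one_le_rpow (by linarith [Nat.cast_nonneg (α := ℝ) k]) hα0.le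
      nlinarith
    · have h1 := hk₀ k h
      rw [Real.norm_eq_abs, Real.norm_eq_abs] at h1
      have hka : (0:ℝ) ≤ (k:ℝ)^α := Real.rpow_nonneg (Nat.cast_nonneg k) _
      have h2 : |((k:ℝ)^α)| = (k:ℝ)^α := abs_of_nonneg hka
      have h3 : v k ≤ (1/2) * (k:ℝ)^α := by
        rw [h2] at h1; linarith [le_abs_self (v k)]
      have h4 : (k:ℝ)^α ≤ ((k:ℝ)+1)^α :=
        Real.rpow_le_rpow (Nat.cast_nonneg k) (by linarith) hα0.le
      have h5 : w k ≤ (3/2) * (k:ℝ)^α := by rw [hwv k]; linarith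
      nlinarith
  -- measurability
  have hτmeas : ∀ n, Measurable (τ n) := by
    intro n
    have : τ n = fun ω => ∑ j ∈ Finset.Icc 1 n, θ j ω := funext (hτ n)
    rw [this]
    exact Finset.measurable_sum _ (fun j _ => hmeas j)
  have hsetmeas : ∀ (n : ℕ) (u : ℝ), MeasurableSet {ω | τ n ω < u} :=
    fun n u => measurableSet_lt (hτmeas n) measurable_const
  -- θ positive a.s.
  have hθpos : ∀ j, 1 ≤ j → ℙ {ω | ¬ (0 < θ j ω)} = 0 := by
    intro j hj
    have h1 : ℙ {ω | 0 < θ j ω} = 1 := by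
      have := hexp j hj 0 le_rfl
      simpa using this
    have hms : MeasurableSet {ω | 0 < θ j ω} :=
      measurableSet_lt measurable_const (hmeas j)
    have h2 : {ω | ¬ (0 < θ j ω)} = {ω | 0 < θ j ω}ᶜ := rfl
    rw [h2, measure_compl hms (measure_ne_top _ _), h1, measure_univ, tsub_self]
  -- single exponential tail bound
  have hθlt : ∀ j, 1 ≤ j → ∀ t : ℝ, 0 ≤ t →
      ℙ (θ j ⁻¹' Set.Iio t) ≤ ENNReal.ofReal (w (j-1) * t) := by
    intro j hj t ht
    have hsub : θ j ⁻¹' Set.Iio t ⊆ {ω | t < θ j ω}ᶜ := by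
      intro ω hω
      simp only [Set.mem_preimage, Set.mem_Iio] at hω
      simp only [Set.mem_compl_iff, Set.mem_setOf_eq, not_lt]
      exact hω.le
    calc ℙ (θ j ⁻¹' Set.Iio t) ≤ ℙ ({ω | t < θ j ω}ᶜ) := measure_mono hsub
      _ = 1 - ℙ {ω | t < θ j ω} := by
          rw [measure_compl (measurableSet_lt measurable_const (hmeas j)) (measure_ne_top _ _),
            measure_univ]
      _ = 1 - ENNReal.ofReal (Real.exp (-(w (j-1)) * t)) := by rw [hexp j hj t ht]
      _ ≤ ENNReal.ofReal (w (j-1) * t) := by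
          rw [tsub_le_iff_right, ← ENNReal.ofReal_add (mul_nonneg (hw (j-1)).le ht)
            (Real.exp_nonneg _), ← ENNReal.ofReal_one]
          apply ENNReal.ofReal_le_ofReal
          have := Real.add_one_le_exp (-(w (j-1)) * t)
          linarith
  -- KEY probability bound
  have KEY : ∀ u : ℝ, 0 ≤ u → ∀ n : ℕ, 1 ≤ n → 128 * C * u ≤ (n:ℝ) ^ (1 - α) →
      ℙ {ω | τ n ω < u} ≤ (4 : ℝ≥0∞)⁻¹ ^ n := by
    intro u hu n hn hNα
    have hn0 : (0:ℝ) < n := by exact_mod_cast hn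
    set t : ℝ := 2 * u / (n:ℝ) with htdef
    have htnn : 0 ≤ t := by positivity
    set h : ℕ := n - n / 2 with hh
    -- the per-factor bound : w (j-1) * t ≤ 1/64 for 1 ≤ j ≤ n
    have hfac : ∀ j, 1 ≤ j → j ≤ n → w (j-1) * t ≤ 1/64 := by
      intro j hj1 hjn
      have hwj : w (j-1) ≤ C * (n:ℝ)^α := by
        have e : ((j-1:ℕ):ℝ) + 1 = (j:ℝ) := by
          have h' : j - 1 + 1 = j := Nat.succ_pred_eq_of_pos hj1
          exact_mod_cast congrArg (Nat.cast : ℕ → ℝ) h'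
        have h1 := hCw (j-1)
        rw [e] at h1
        have h2 : ((j:ℝ))^α ≤ ((n:ℝ))^α :=
          Real.rpow_le_rpow (Nat.cast_nonneg j) (by exact_mod_cast hjn) hα0.le
        nlinarith [Real.rpow_nonneg (Nat.cast_nonneg j) α]
      rcases eq_or_lt_of_le hu with h0 | h0
      · have : t = 0 := by rw [htdef, ← h0]; ring
        rw [this, mul_zero]; norm_num
      · have hna : (0:ℝ) < (n:ℝ)^α := Real.rpow_pos_of_pos hn0 _
        have hsplit : (n:ℝ) = (n:ℝ)^α * (n:ℝ)^(1-α) := by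
          rw [← Real.rpow_add hn0]; norm_num
        have hbound : C * (n:ℝ)^α * (2*u) ≤ 1/64 * (n:ℝ) := by
          have hmm : (n:ℝ)^α * (128*C*u) ≤ (n:ℝ)^α * ((n:ℝ)^(1-α)) :=
            mul_le_mul_of_nonneg_left hNα hna.le
          nlinarith
        have e2 : w (j-1) * t ≤ (C * (n:ℝ)^α * (2*u)) / n := by
          rw [htdef, ← mul_div_assoc]
          gcongr
        refine e2.trans ?_
        rw [div_le_iff₀ hn0]
        linarith
    -- inclusion in union of events
    have hincl : {ω | τ n ω < u} ⊆ (⋃ j ∈ Finset.Icc 1 n, {ω | ¬ (0 < θ j ω)}) ∪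
        ⋃ S ∈ (Finset.Icc 1 n).powersetCard h, ⋂ j ∈ S, θ j ⁻¹' Set.Iio t := by
      intro ω hω
      simp only [Set.mem_setOf_eq] at hω
      by_cases hG : ∀ j ∈ Finset.Icc 1 n, 0 < θ j ω
      · right
        rw [hτ n ω] at hω
        obtain ⟨S, hSsub, hScard, hSlt⟩ := aux_select n hn u (θ · ω) hG hω
        refine Set.mem_iUnion₂.2 ⟨S, Finset.mem_powersetCard.2 ⟨hSsub, hScard⟩, ?_⟩
        exact Set.mem_iInter₂.2 (fun j hj => hSlt j hj)
      · left
        push_neg at hG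
        obtain ⟨j, hj, hjle⟩ := hG
        exact Set.mem_iUnion₂.2 ⟨j, hj, fun hgt => absurd hgt (not_lt.2 hjle)⟩
    have hnull : ℙ (⋃ j ∈ Finset.Icc 1 n, {ω | ¬ (0 < θ j ω)}) = 0 := by
      refine le_antisymm ?_ zero_le
      calc ℙ (⋃ j ∈ Finset.Icc 1 n, {ω | ¬ (0 < θ j ω)})
          ≤ ∑ j ∈ Finset.Icc 1 n, ℙ {ω | ¬ (0 < θ j ω)} := measure_biUnion_finset_le _ _
        _ = 0 := Finset.sum_eq_zero (fun j hj => hθpos j (Finset.mem_Icc.1 hj).1)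
    have hprod : ∀ S ∈ (Finset.Icc 1 n).powersetCard h,
        ℙ (⋂ j ∈ S, θ j ⁻¹' Set.Iio t) ≤ ENNReal.ofReal (1/64) ^ h := by
      intro S hS
      obtain ⟨hSsub, hScard⟩ := Finset.mem_powersetCard.1 hS
      have hmul := hindep.measure_inter_preimage_eq_mul S
        (sets := fun _ => Set.Iio t) (fun _ _ => measurableSet_Iio)
      rw [hmul]
      calc ∏ j ∈ S, ℙ (θ j ⁻¹' Set.Iio t)
          ≤ ∏ _j ∈ S, ENNReal.ofReal (1/64) := by
            refine Finset.prod_le_prod' (fun j hj => ?_)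
            have hj1 : 1 ≤ j := (Finset.mem_Icc.1 (hSsub hj)).1
            have hjn : j ≤ n := (Finset.mem_Icc.1 (hSsub hj)).2
            exact (hθlt j hj1 t htnn).trans
              (ENNReal.ofReal_le_ofReal (hfac j hj1 hjn))
        _ = ENNReal.ofReal (1/64) ^ h := by rw [Finset.prod_const, hScard]
    -- put together
    have hof : ENNReal.ofReal (1/64) = (2:ℝ≥0∞)⁻¹ ^ 6 := by
      rw [show ((1:ℝ)/64) = (64:ℝ)⁻¹ by norm_num,
        ENNReal.ofReal_inv_of_pos (by norm_num), ← ENNReal.inv_pow]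
      norm_num
    calc ℙ {ω | τ n ω < u}
        ≤ ℙ (⋃ j ∈ Finset.Icc 1 n, {ω | ¬ (0 < θ j ω)}) +
          ℙ (⋃ S ∈ (Finset.Icc 1 n).powersetCard h, ⋂ j ∈ S, θ j ⁻¹' Set.Iio t) :=
          (measure_mono hincl).trans (measure_union_le _ _)
      _ = ℙ (⋃ S ∈ (Finset.Icc 1 n).powersetCard h, ⋂ j ∈ S, θ j ⁻¹' Set.Iio t) := by
          rw [hnull, zero_add]
      _ ≤ ∑ S ∈ (Finset.Icc 1 n).powersetCard h, ℙ (⋂ j ∈ S, θ j ⁻¹' Set.Iio t) :=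
          measure_biUnion_finset_le _ _
      _ ≤ ∑ _S ∈ (Finset.Icc 1 n).powersetCard h, ENNReal.ofReal (1/64) ^ h :=
          Finset.sum_le_sum hprod
      _ = (n.choose h : ℝ≥0∞) * ENNReal.ofReal (1/64) ^ h := by
          rw [Finset.sum_const, Finset.card_powersetCard, Nat.card_Icc, nsmul_eq_mul]
          norm_num
      _ ≤ (2:ℝ≥0∞)^n * ((2:ℝ≥0∞))⁻¹^(6*h) := by
          rw [hof, ← pow_mul]
          apply mul_le_mul_left
          have hch : n.choose h ≤ 2^n := by
            calc n.choose h ≤ ∑ m ∈ Finset.range (n+1), n.choose m :=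
                Finset.single_le_sum (fun m _ => Nat.zero_le _)
                  (Finset.mem_range.2 (by omega))
              _ = 2^n := Nat.sum_range_choose n
          exact_mod_cast Nat.cast_le.2 hch
      _ ≤ (4:ℝ≥0∞)⁻¹ ^ n := aux_pow_helper (by omega)
  -- constants for the final bound
  set β : ℝ := 1 / (1 - α) with hβ
  have hβpos : 0 < β := by rw [hβ]; positivity
  set A : ℝ := (128*C) ^ β + 2 with hA
  have hA0 : 0 < A := by
    have : 0 < (128*C) ^ β := Real.rpow_pos_of_pos (by linarith) _
    linarith
  refine ⟨(A+2)^2 + 8, by positivity, ?_⟩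
  intro u hu
  set N : ℕ := ⌈(128*C*u) ^ β⌉₊ + 1 with hN
  have hNkey : ∀ n : ℕ, N ≤ n → ℙ {ω | τ n ω < u} ≤ (4:ℝ≥0∞)⁻¹ ^ n := by
    intro n hnn
    have hn1 : 1 ≤ n := le_trans (by omega) hnn
    apply KEY u hu n hn1
    have hx0 : (0:ℝ) ≤ 128*C*u := by positivity
    have hx : (128*C*u) ^ β ≤ (n:ℝ) := by
      refine le_trans (Nat.le_ceil _) ?_
      exact_mod_cast Nat.le_of_succ_le hnn
    have h2 : ((128*C*u)^β)^(1-α) ≤ (n:ℝ)^(1-α) :=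
      Real.rpow_le_rpow (Real.rpow_nonneg hx0 _) hx h1α.le
    have h3 : ((128*C*u)^β)^(1-α) = 128*C*u := by
      rw [← Real.rpow_mul hx0, hβ, one_div, inv_mul_cancel₀ (ne_of_gt h1α), Real.rpow_one]
    rwa [h3] at h2
  have hind : ∀ k : ℕ, (∫⁻ ω, (if τ (k+1) ω < u then (1:ℝ≥0∞) else 0) ∂ℙ)
      = ℙ {ω | τ (k+1) ω < u} := by
    intro k
    rw [← lintegral_indicator_one (hsetmeas (k+1) u)]
    apply lintegral_congr
    intro ω
    simp [Set.indicator_apply, Set.mem_setOf_eq]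
  have hitemeas : ∀ k : ℕ,
      Measurable (fun ω => (if τ (k+1) ω < u then (1:ℝ≥0∞) else 0)) :=
    fun k => Measurable.ite (hsetmeas (k+1) u) measurable_const measurable_const
  have hEX : (∫⁻ ω, X u ω ∂ℙ) = ∑' k : ℕ, ℙ {ω | τ (k+1) ω < u} := by
    calc (∫⁻ ω, X u ω ∂ℙ)
        = ∫⁻ ω, ∑' k : ℕ, (if τ (k+1) ω < u then (1:ℝ≥0∞) else 0) ∂ℙ :=
          lintegral_congr (fun ω => hX u ω)
      _ = ∑' k : ℕ, ∫⁻ ω, (if τ (k+1) ω < u then (1:ℝ≥0∞) else 0) ∂ℙ :=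
          lintegral_tsum (fun k => (hitemeas k).aemeasurable)
      _ = ∑' k : ℕ, ℙ {ω | τ (k+1) ω < u} := tsum_congr hind
  have hgeo : ∑' k : ℕ, (2:ℝ≥0∞)⁻¹ ^ k = 2 := by
    rw [ENNReal.tsum_geometric, ENNReal.one_sub_inv_two, inv_inv]
  have hq14 : (4:ℝ≥0∞)⁻¹ ≤ 1 := by
    rw [ENNReal.inv_le_one]; norm_num
  have h42 : (4:ℝ≥0∞)⁻¹ ≤ (2:ℝ≥0∞)⁻¹ := by
    apply ENNReal.inv_le_inv' ; norm_num
  have htail : ∀ k : ℕ, N ≤ k → ℙ {ω | τ (k+1) ω < u} ≤ (4:ℝ≥0∞)⁻¹ ^ k := by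
    intro k hk
    refine (hNkey (k+1) (by omega)).trans ?_
    exact pow_le_pow_of_le_one zero_le hq14 (by omega)
  have hsum1 : ∑' k : ℕ, ℙ {ω | τ (k+1) ω < u} ≤ (N : ℝ≥0∞) + 2 := by
    calc ∑' k : ℕ, ℙ {ω | τ (k+1) ω < u}
        ≤ ∑' k : ℕ, ((if k < N then (1:ℝ≥0∞) else 0) + (2:ℝ≥0∞)⁻¹ ^ k) := by
          refine ENNReal.tsum_le_tsum (fun k => ?_)
          by_cases hk : k < N
          · rw [if_pos hk]
            exact le_add_right prob_le_one
          · rw [if_neg hk, zero_add]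
            exact (htail k (by omega)).trans (pow_le_pow_left₀ zero_le h42 k)
      _ = (∑' k : ℕ, (if k < N then (1:ℝ≥0∞) else 0)) + ∑' k : ℕ, (2:ℝ≥0∞)⁻¹ ^ k :=
          ENNReal.tsum_add
      _ = (N : ℝ≥0∞) + 2 := by
          rw [hgeo]
          congr 1
          rw [tsum_eq_sum (s := Finset.range N)
            (by intro k hk; rw [if_neg]; simp at hk; omega)]
          rw [Finset.sum_congr rfl (fun k hk => if_pos (Finset.mem_range.1 hk))]
          simp
  have hEX2 : (∫⁻ ω, (X u ω)^2 ∂ℙ)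
      ≤ ∑' k : ℕ, ((2*k+1 : ℕ) : ℝ≥0∞) * ℙ {ω | τ (k+1) ω < u} := by
    have hpt : ∀ ω, (X u ω)^2
        ≤ ∑' k : ℕ, ((2*k+1 : ℕ) : ℝ≥0∞) * (if τ (k+1) ω < u then (1:ℝ≥0∞) else 0) := by
      intro ω
      rw [hX u ω]
      exact aux_sq_tsum _ (fun k => by split <;> simp)
    calc (∫⁻ ω, (X u ω)^2 ∂ℙ)
        ≤ ∫⁻ ω, ∑' k : ℕ, ((2*k+1 : ℕ) : ℝ≥0∞) * (if τ (k+1) ω < u then (1:ℝ≥0∞) else 0) ∂ℙ :=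
          lintegral_mono hpt
      _ = ∑' k : ℕ, ∫⁻ ω, ((2*k+1 : ℕ) : ℝ≥0∞) * (if τ (k+1) ω < u then (1:ℝ≥0∞) else 0) ∂ℙ :=
          lintegral_tsum (fun k => ((hitemeas k).const_mul _).aemeasurable)
      _ = ∑' k : ℕ, ((2*k+1 : ℕ) : ℝ≥0∞) * ℙ {ω | τ (k+1) ω < u} := by
          refine tsum_congr (fun k => ?_)
          rw [lintegral_const_mul _ (hitemeas k), hind k]
  have h241 : (2:ℝ≥0∞) * 4⁻¹ = 2⁻¹ := by
    rw [show (4:ℝ≥0∞) = 2*2 by norm_num,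
      ENNReal.mul_inv (Or.inl (by norm_num)) (Or.inl (by norm_num)), ← mul_assoc,
      ENNReal.mul_inv_cancel (by norm_num) (by norm_num), one_mul]
  have hsum2 : ∑' k : ℕ, ((2*k+1 : ℕ) : ℝ≥0∞) * ℙ {ω | τ (k+1) ω < u}
      ≤ (N : ℝ≥0∞)^2 + 6 := by
    calc ∑' k : ℕ, ((2*k+1 : ℕ) : ℝ≥0∞) * ℙ {ω | τ (k+1) ω < u}
        ≤ ∑' k : ℕ, ((if k < N then ((2*k+1 : ℕ) : ℝ≥0∞) else 0) + 3 * (2:ℝ≥0∞)⁻¹ ^ k) := by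
          refine ENNReal.tsum_le_tsum (fun k => ?_)
          by_cases hk : k < N
          · rw [if_pos hk]
            refine le_add_right ?_
            calc ((2*k+1 : ℕ) : ℝ≥0∞) * ℙ {ω | τ (k+1) ω < u}
                ≤ ((2*k+1 : ℕ) : ℝ≥0∞) * 1 := mul_le_mul_right prob_le_one _
              _ = ((2*k+1 : ℕ) : ℝ≥0∞) := mul_one _
          · rw [if_neg hk, zero_add]
            calc ((2*k+1 : ℕ) : ℝ≥0∞) * ℙ {ω | τ (k+1) ω < u}
                ≤ ((3 * 2^k : ℕ) : ℝ≥0∞) * (4:ℝ≥0∞)⁻¹ ^ k :=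
                  mul_le_mul' (Nat.cast_le.2 (aux_odd_le k)) (htail k (by omega))
              _ = 3 * ((2:ℝ≥0∞) * 4⁻¹) ^ k := by push_cast; rw [mul_pow, mul_assoc]
              _ = 3 * (2:ℝ≥0∞)⁻¹ ^ k := by rw [h241]
      _ = (∑' k : ℕ, (if k < N then ((2*k+1 : ℕ) : ℝ≥0∞) else 0))
          + ∑' k : ℕ, 3 * (2:ℝ≥0∞)⁻¹ ^ k := ENNReal.tsum_add
      _ = (N : ℝ≥0∞)^2 + 6 := by
          congr 1
          · rw [tsum_eq_sum (s := Finset.range N)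
              (by intro k hk; rw [if_neg]; simp at hk; omega)]
            rw [Finset.sum_congr rfl (fun k hk => if_pos (Finset.mem_range.1 hk))]
            rw [← Nat.cast_sum, aux_sum_range_odd]
            push_cast; ring
          · rw [ENNReal.tsum_mul_left, hgeo]
            norm_num
  have hβu : (1:ℝ) ≤ (1+u) ^ β := Real.one_le_rpow (by linarith) hβpos.le
  have hβnn : (0:ℝ) ≤ (1+u) ^ β := Real.rpow_nonneg (by linarith) _
  have hNle : (N : ℝ) ≤ A * (1+u) ^ β := by
    have h1 : (N : ℝ) ≤ (128*C*u) ^ β + 2 := by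
      rw [hN]
      push_cast
      have := Nat.ceil_lt_add_one
        (show (0:ℝ) ≤ (128*C*u)^β from Real.rpow_nonneg (by positivity) _)
      linarith
    have h2 : (128*C*u) ^ β = (128*C)^β * u^β := Real.mul_rpow (by positivity) hu
    have h3 : u ^ β ≤ (1+u) ^ β := Real.rpow_le_rpow hu (by linarith) hβpos.le
    have h4 : (128*C)^β * u^β ≤ (128*C)^β * (1+u)^β :=
      mul_le_mul_of_nonneg_left h3 (Real.rpow_nonneg (by positivity) _)
    rw [hA]
    nlinarith
  have hDA : A + 2 ≤ (A+2)^2 + 8 := by nlinarith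
  constructor
  · refine le_trans (le_of_eq hEX) (le_trans hsum1 ?_)
    have e : (N : ℝ≥0∞) + 2 = ENNReal.ofReal ((N:ℝ) + 2) := by
      rw [ENNReal.ofReal_add (Nat.cast_nonneg N) (by norm_num), ENNReal.ofReal_natCast]
      norm_num
    rw [e]
    apply ENNReal.ofReal_le_ofReal
    calc (N:ℝ) + 2 ≤ A*(1+u)^β + 2*(1+u)^β := by linarith
      _ = (A+2)*(1+u)^β := by ring
      _ ≤ ((A+2)^2+8)*(1+u)^β := mul_le_mul_of_nonneg_right hDA hβnn
  · refine le_trans (hEX2.trans hsum2) ?_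
    have e : (N : ℝ≥0∞)^2 + 6 = ENNReal.ofReal ((N:ℝ)^2 + 6) := by
      rw [ENNReal.ofReal_add (by positivity) (by norm_num),
        ENNReal.ofReal_pow (Nat.cast_nonneg N), ENNReal.ofReal_natCast]
      norm_num
    rw [e]
    apply ENNReal.ofReal_le_ofReal
    have h2β : (1+u) ^ (2/(1-α)) = ((1+u)^β)^2 := by
      rw [hβ, show (2/(1-α)) = (1/(1-α)) * 2 by ring, Real.rpow_mul (by linarith),
        show ((2:ℝ)) = ((2:ℕ):ℝ) by norm_num, Real.rpow_natCast]
    rw [h2β]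
    have hsq : (N:ℝ)^2 ≤ (A*(1+u)^β)^2 := pow_le_pow_left₀ (Nat.cast_nonneg N) hNle 2
    rw [mul_pow] at hsq
    have hs2 : (1:ℝ) ≤ ((1+u)^β)^2 := by nlinarith
    calc (N:ℝ)^2 + 6 ≤ A^2*((1+u)^β)^2 + 6*((1+u)^β)^2 := by linarith
      _ = (A^2+6)*((1+u)^β)^2 := by ring
      _ ≤ ((A+2)^2+8)*((1+u)^β)^2 :=
          mul_le_mul_of_nonneg_right (by nlinarith) (sq_nonneg _)
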